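/- Let x₁,...,xₙ be real random variables each with a law symmetric about 0, let u_j = ReLU(x_j), and let c₁,...,cₙ ~ N(0,σ²) i.i.d., d₁,...,dₙ uniform on {−1,1} i.i.d., all mutually independent (also independent of the x's). Define y = DCu with C = circ(c), D = diag(d). Then for i ≠ i′, cov(y_i, y_{i′}) = 0, and var(y_i) = (σ²/2)·Σ_j var(x_j). -/

import Mathlib

open MeasureTheory ProbabilityTheory
open scoped ENNReal NNReal

section AuxLemmas
open Real Set


section Aux

variable {Ω : Type*} [MeasurableSpace Ω] {μ : Measure Ω} [IsProbabilityMeasure μ]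

/-- Product of independent integrable functions is integrable with factoring integral. -/
lemma aux_prod_int {ι : Type*} {g : ι → Ω → ℝ}
    (hg : iIndepFun (m := fun _ => (inferInstance : MeasurableSpace ℝ)) g μ)
    (hm : ∀ t, Measurable (g t)) (hint : ∀ t, Integrable (g t) μ) (S : Finset ι) :
    Integrable (fun ω => ∏ t ∈ S, g t ω) μ ∧
      (∫ ω, ∏ t ∈ S, g t ω ∂μ) = ∏ t ∈ S, ∫ ω, g t ω ∂μ := by
  classical
  induction S using Finset.induction_on with
  | empty => simp
  | insert a S' ha ih =>
    have hip : IndepFun (∏ t ∈ S', g t) (g a) μ :=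
      hg.indepFun_finset_prod_of_notMem hm ha
    have hprodeq : (∏ t ∈ S', g t) = fun ω => ∏ t ∈ S', g t ω := by
      funext ω; simp [Finset.prod_apply]
    have h1 : Integrable ((∏ t ∈ S', g t) * g a) μ :=
      hip.integrable_mul (by rw [hprodeq]; exact ih.1) (hint a)
    have h2 : integral μ ((∏ t ∈ S', g t) * g a)
        = integral μ (∏ t ∈ S', g t) * integral μ (g a) :=
      hip.integral_mul_eq_mul_integral (by rw [hprodeq]; exact ih.1.aestronglyMeasurable)
        (hint a).aestronglyMeasurable
    constructor
    · have := h1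
      refine this.congr (Filter.Eventually.of_forall fun ω => ?_)
      simp [Finset.prod_insert ha, hprodeq, mul_comm]
    · rw [Finset.prod_insert ha, ← ih.2]
      calc (∫ ω, ∏ t ∈ insert a S', g t ω ∂μ)
          = integral μ ((∏ t ∈ S', g t) * g a) := by
            congr 1; funext ω; simp [Finset.prod_insert ha, hprodeq, mul_comm]
        _ = (∫ ω, g a ω ∂μ) * ∫ ω, ∏ t ∈ S', g t ω ∂μ := by
            rw [h2, hprodeq]; ring
end Aux


lemma aux_sq_exp_integrable {b : ℝ} (hb : 0 < b) :
    Integrable (fun x : ℝ => x ^ 2 * Real.exp (-b * x ^ 2)) := by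
  have := integrable_rpow_mul_exp_neg_mul_sq hb (s := 2) (by norm_num)
  refine this.congr (Filter.Eventually.of_forall fun x => ?_)
  norm_num [Real.rpow_natCast x 2]

lemma aux_sq_exp_integral {b : ℝ} (hb : 0 < b) :
    ∫ x : ℝ, x ^ 2 * Real.exp (-b * x ^ 2) = b ^ (-(3:ℝ)/2) * (Real.sqrt Real.pi / 2) := by
  have h1 : (fun x : ℝ => x ^ 2 * Real.exp (-b * x ^ 2))
      = fun x : ℝ => (fun t : ℝ => t ^ 2 * Real.exp (-b * t ^ 2)) |x| := by
    funext x; simp [sq_abs]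
  rw [h1, integral_comp_abs (f := fun t : ℝ => t ^ 2 * Real.exp (-b * t ^ 2))]
  have h2 : ∀ x : ℝ, x ^ (2:ℝ) = x ^ (2:ℕ) := fun x => by
    norm_num [Real.rpow_natCast x 2]
  have h3 : (∫ x in Ioi (0:ℝ), x ^ 2 * Real.exp (-b * x ^ 2))
      = ∫ x in Ioi (0:ℝ), x ^ (2:ℝ) * Real.exp (-b * x ^ (2:ℝ)) := by
    refine setIntegral_congr_fun measurableSet_Ioi fun x _ => ?_
    rw [h2]
  rw [h3, integral_rpow_mul_exp_neg_mul_rpow two_pos (by norm_num) hb]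
  have h4 : ((2:ℝ) + 1) / 2 = 1/2 + 1 := by norm_num
  rw [h4, Real.Gamma_add_one (by norm_num), Real.Gamma_one_half_eq]
  have : (-((2:ℝ)+1)/2) = -(3:ℝ)/2 := by norm_num
  rw [this]; ring

lemma aux_integrable_dirac {f : ℝ → ℝ} (hf : Measurable f) (a : ℝ) :
    Integrable f (Measure.dirac a) :=
  ⟨hf.aestronglyMeasurable, by
    rw [HasFiniteIntegral, lintegral_dirac' a hf.enorm]; exact enorm_lt_top⟩

-- gaussianPDFReal 0 v x as explicit product
lemma aux_pdf_eq (v : ℝ≥0) (hv : v ≠ 0) (x : ℝ) :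
    gaussianPDFReal 0 v x
      = (Real.sqrt (2 * Real.pi * v))⁻¹ * Real.exp (-(((2:ℝ)*v)⁻¹) * x ^ 2) := by
  rw [gaussianPDFReal]
  congr 1
  congr 1
  have hv' : (0:ℝ) < v := lt_of_le_of_ne v.2 (by exact_mod_cast (Ne.symm hv))
  field_simp
  ring

lemma aux_gauss_sq_integrable (v : ℝ≥0) :
    Integrable (fun x : ℝ => x ^ 2) (gaussianReal 0 v) := by
  by_cases hv : v = 0
  · rw [hv, gaussianReal_zero_var]
    exact aux_integrable_dirac (by measurability) 0
  · rw [gaussianReal_of_var_ne_zero 0 hv]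
    have hb : (0:ℝ) < ((2:ℝ)*v)⁻¹ := by
      have hv' : (0:ℝ) < v := lt_of_le_of_ne v.2 (by exact_mod_cast (Ne.symm hv))
      positivity
    rw [integrable_withDensity_iff (measurable_gaussianPDF 0 v)
      (Filter.Eventually.of_forall fun x => ENNReal.ofReal_lt_top)]
    have : (fun x : ℝ => x ^ 2 * (gaussianPDF 0 v x).toReal)
        = fun x : ℝ => (Real.sqrt (2 * Real.pi * v))⁻¹ *
            (x ^ 2 * Real.exp (-(((2:ℝ)*v)⁻¹) * x ^ 2)) := by
      funext x
      rw [gaussianPDF, ENNReal.toReal_ofReal (gaussianPDFReal_nonneg _ _ _), aux_pdf_eq v hv]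
      ring
    rw [this]
    exact (aux_sq_exp_integrable hb).const_mul _


lemma aux_gauss_sq_integral (v : ℝ≥0) :
    ∫ x, x ^ 2 ∂(gaussianReal 0 v) = (v : ℝ) := by
  by_cases hv : v = 0
  · simp [hv, gaussianReal_zero_var]
  · have hv' : (0:ℝ) < v := lt_of_le_of_ne v.2 (by exact_mod_cast (Ne.symm hv))
    set b : ℝ := ((2:ℝ)*v)⁻¹ with hbdef
    have hb : (0:ℝ) < b := by positivity
    rw [gaussianReal_of_var_ne_zero 0 hv]
    have hpdf : gaussianPDF 0 v = fun x => ((gaussianPDFReal 0 v x).toNNReal : ℝ≥0∞) := by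
      funext x; rfl
    rw [hpdf, integral_withDensity_eq_integral_smul
      ((measurable_gaussianPDFReal 0 v).real_toNNReal) (fun x => x ^ 2)]
    have heq : (fun x : ℝ => (gaussianPDFReal 0 v x).toNNReal • x ^ 2)
        = fun x : ℝ => (Real.sqrt (2 * Real.pi * v))⁻¹ *
            (x ^ 2 * Real.exp (-b * x ^ 2)) := by
      funext x
      rw [NNReal.smul_def, smul_eq_mul, Real.coe_toNNReal _ (gaussianPDFReal_nonneg _ _ _),
        aux_pdf_eq v hv]
      ring
    rw [heq, integral_const_mul, aux_sq_exp_integral hb]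
    -- arithmetic
    set s : ℝ := Real.sqrt (2 * v) with hsdef
    have hs : 0 < s := Real.sqrt_pos.mpr (by positivity)
    have hs2 : s ^ 2 = 2 * v := Real.sq_sqrt (by positivity)
    have hp : 0 < Real.sqrt Real.pi := Real.sqrt_pos.mpr Real.pi_pos
    have hsplit : Real.sqrt (2 * Real.pi * (v:ℝ)) = s * Real.sqrt Real.pi := by
      rw [hsdef, ← Real.sqrt_mul (by positivity)]
      ring_nf
    have hbpow : b ^ (-(3:ℝ)/2) = s ^ 3 := by
      have h1 : b ^ (-(3:ℝ)/2) = ((2:ℝ)*v) ^ ((3:ℝ)/2) := by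
        rw [hbdef, ← Real.rpow_neg_one ((2:ℝ)*(v:ℝ)), ← Real.rpow_mul (by positivity)]
        norm_num
      rw [h1, hsdef]
      rw [show ((3:ℝ)/2) = (1/2) * 3 by norm_num, Real.rpow_mul (by positivity),
        ← Real.sqrt_eq_rpow, show (3:ℝ) = ((3:ℕ):ℝ) by norm_num, Real.rpow_natCast]
    rw [hsplit, hbpow]
    have hπ : Real.sqrt Real.pi ≠ 0 := ne_of_gt hp
    have hs0 : s ≠ 0 := ne_of_gt hs
    field_simp
    linear_combination hs2


lemma aux_gauss_memL2 (v : ℝ≥0) : MemLp (id : ℝ → ℝ) 2 (gaussianReal 0 v) :=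
  (memLp_two_iff_integrable_sq aestronglyMeasurable_id).2 (aux_gauss_sq_integrable v)

/-- Mean zero for a measure invariant under negation. -/
lemma aux_symm_mean {ν : Measure ℝ} (hν : Measure.map (fun x : ℝ => -x) ν = ν)
    (h : Integrable (id : ℝ → ℝ) ν) : ∫ x, x ∂ν = 0 := by
  have h1 : ∫ x, x ∂(Measure.map (fun x : ℝ => -x) ν) = ∫ x, -x ∂ν :=
    integral_map measurable_neg.aemeasurable aestronglyMeasurable_id
  rw [hν] at h1
  have h2 : ∫ x, -x ∂ν = -∫ x, x ∂ν := integral_neg _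
  linarith [h1, h2]

lemma aux_gauss_symm (v : ℝ≥0) :
    Measure.map (fun x : ℝ => -x) (gaussianReal 0 v) = gaussianReal 0 v := by
  have := gaussianReal_map_const_mul (μ := 0) (v := v) (-1)
  have h2 : (fun x : ℝ => -1 * x) = fun x : ℝ => -x := by funext x; ring
  rw [h2] at this
  rw [this]
  congr 1
  · ring
  · ext
    norm_num

lemma aux_gauss_mean (v : ℝ≥0) : ∫ x, x ∂(gaussianReal 0 v) = 0 :=
  aux_symm_mean (aux_gauss_symm v) ((aux_gauss_memL2 v).integrable one_le_two)

-- the sign measure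
noncomputable def signMeasure : Measure ℝ :=
  (2 : ℝ≥0∞)⁻¹ • (Measure.dirac (-1) + Measure.dirac 1)

instance : IsProbabilityMeasure signMeasure := by
  constructor
  rw [signMeasure]
  simp
  exact ENNReal.inv_two_add_inv_two

lemma aux_sign_integral {f : ℝ → ℝ} (hf : Measurable f) :
    ∫ x, f x ∂signMeasure = (f (-1) + f 1) / 2 := by
  rw [signMeasure, integral_smul_measure,
    integral_add_measure (aux_integrable_dirac hf _) (aux_integrable_dirac hf _),
    integral_dirac, integral_dirac]
  simp [ENNReal.toReal_inv]
  ring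

lemma aux_sign_memL2 : MemLp (id : ℝ → ℝ) 2 signMeasure := by
  refine (memLp_two_iff_integrable_sq aestronglyMeasurable_id).2 ?_
  rw [signMeasure]
  refine Integrable.smul_measure ?_ (by norm_num)
  exact (aux_integrable_dirac (by measurability) _).add_measure
    (aux_integrable_dirac (by measurability) _)

end AuxLemmas

/-- Covariance of two real random variables: `E[XY] − E[X]E[Y]`. -/
noncomputable def rcov {Ω : Type*} [MeasurableSpace Ω] (X Y : Ω → ℝ) (μ : Measure Ω) : ℝ :=
  (∫ ω, X ω * Y ω ∂μ) - (∫ ω, X ω ∂μ) * (∫ ω, Y ω ∂μ)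

/-- With `u_j = ReLU(x_j)` for square-integrable `x_j` with symmetric laws,
`c_j ~ N(0,σ²)` i.i.d., `d_j` i.i.d. uniform signs, all mutually independent, the
vector `y = DCu` (i.e. `y_i = Σ_j c_{(j−i) mod n} u_j d_j`) has uncorrelated
coordinates with `var(y_i) = (σ²/2) Σ_j var(x_j)`. -/
theorem diag_circ_relu_cov {Ω : Type*} [MeasurableSpace Ω] (μ : Measure Ω)
    [IsProbabilityMeasure μ] (n : ℕ) [NeZero n]
    (c d x : Fin n → Ω → ℝ) (σ2 : ℝ≥0)
    (hcm : ∀ j, Measurable (c j)) (hdm : ∀ j, Measurable (d j))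
    (hxm : ∀ j, Measurable (x j))
    (hc : ∀ j, Measure.map (c j) μ = gaussianReal 0 σ2)
    (hd : ∀ j, Measure.map (d j) μ =
      (2 : ℝ≥0∞)⁻¹ • (Measure.dirac (-1) + Measure.dirac 1))
    (hxsymm : ∀ j, Measure.map (x j) μ = Measure.map (fun ω => -x j ω) μ)
    (hxL2 : ∀ j, MemLp (x j) 2 μ)
    (hindep : iIndepFun
      (m := fun _ : Fin n ⊕ (Fin n ⊕ Fin n) => (inferInstance : MeasurableSpace ℝ))
      (Sum.elim c (Sum.elim d x)) μ)
    (y : Fin n → Ω → ℝ)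
    (hy : ∀ i, y i = fun ω => ∑ j : Fin n, c (j - i) ω * max 0 (x j ω) * d j ω) :
    (∀ i i' : Fin n, i ≠ i' → rcov (y i) (y i') μ = 0) ∧
      (∀ i : Fin n, variance (y i) μ = ((σ2 : ℝ) / 2) * ∑ j, variance (x j) μ) := by
  classical
  set g : Fin n ⊕ (Fin n ⊕ Fin n) → Ω → ℝ :=
    Sum.elim c (Sum.elim d (fun j ω => max 0 (x j ω))) with hgdef
  have hgm : ∀ t, Measurable (g t) := by
    rintro (j | j | j)
    · exact hcm j
    · exact hdm j
    · exact measurable_const.max (hxm j)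
  -- independence of the transformed family
  have hgindep : iIndepFun (m := fun _ => (inferInstance : MeasurableSpace ℝ)) g μ := by
    have hcomp := hindep.comp
      (Sum.elim (fun _ => (id : ℝ → ℝ))
        (Sum.elim (fun _ => (id : ℝ → ℝ)) (fun _ => fun r : ℝ => max 0 r)))
      (by rintro (j | j | j)
          · exact measurable_id
          · exact measurable_id
          · exact measurable_const.max measurable_id)
    convert hcomp using 1
    funext t
    rcases t with j | j | j <;> rfl
  -- L² bounds
  have hgL2 : ∀ t, MemLp (g t) 2 μ := by
    rintro (j | j | j)
    · have h1 : MemLp (id : ℝ → ℝ) 2 (Measure.map (c j) μ) := by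
        rw [hc j]; exact aux_gauss_memL2 σ2
      exact (memLp_map_measure_iff aestronglyMeasurable_id (hcm j).aemeasurable).1 h1
    · have h1 : MemLp (id : ℝ → ℝ) 2 (Measure.map (d j) μ) := by
        rw [hd j]; exact aux_sign_memL2
      exact (memLp_map_measure_iff aestronglyMeasurable_id (hdm j).aemeasurable).1 h1
    · refine (hxL2 j).of_le (measurable_const.max (hxm j)).aestronglyMeasurable ?_
      refine Filter.Eventually.of_forall fun ω => ?_
      simp only [Real.norm_eq_abs, hgdef, Sum.elim_inr]
      rw [abs_le]
      constructor
      · exact le_trans (neg_nonpos.2 (abs_nonneg _)) (le_max_left _ _)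
      · exact max_le (abs_nonneg _) (le_abs_self _)
  -- integrability of powers up to 2
  have hgint2 : ∀ t (k : ℕ), k ≤ 2 → Integrable (fun ω => g t ω ^ k) μ := by
    intro t k hk
    interval_cases k
    · simpa using (integrable_const (1:ℝ) (μ := μ))
    · simpa [pow_one] using (hgL2 t).integrable one_le_two
    · exact (hgL2 t).integrable_sq
  -- integrals of the basic variables
  have Ic1 : ∀ a : Fin n, ∫ ω, c a ω ∂μ = 0 := by
    intro a
    have h1 : ∫ xx, xx ∂(Measure.map (c a) μ) = ∫ ω, c a ω ∂μ :=
      integral_map (hcm a).aemeasurable aestronglyMeasurable_id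
    rw [← h1, hc a, aux_gauss_mean]
  have Ic2 : ∀ a : Fin n, ∫ ω, c a ω ^ 2 ∂μ = (σ2 : ℝ) := by
    intro a
    have h1 : ∫ xx, xx ^ 2 ∂(Measure.map (c a) μ) = ∫ ω, c a ω ^ 2 ∂μ :=
      integral_map (hcm a).aemeasurable (by fun_prop)
    rw [← h1, hc a, aux_gauss_sq_integral]
  have hdmap : ∀ a : Fin n, Measure.map (d a) μ = signMeasure := fun a => hd a
  have Id1 : ∀ a : Fin n, ∫ ω, d a ω ∂μ = 0 := by
    intro a
    have h1 : ∫ xx, xx ∂(Measure.map (d a) μ) = ∫ ω, d a ω ∂μ :=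
      integral_map (hdm a).aemeasurable aestronglyMeasurable_id
    rw [← h1, hdmap a, aux_sign_integral (f := fun t : ℝ => t) measurable_id]
    norm_num
  have Id2 : ∀ a : Fin n, ∫ ω, d a ω ^ 2 ∂μ = 1 := by
    intro a
    have h1 : ∫ xx, xx ^ 2 ∂(Measure.map (d a) μ) = ∫ ω, d a ω ^ 2 ∂μ :=
      integral_map (hdm a).aemeasurable (by fun_prop)
    rw [← h1, hdmap a, aux_sign_integral (by fun_prop)]
    norm_num
  -- mean of x is zero, and the half-variance identity for the ReLU
  have Ix1 : ∀ j : Fin n, ∫ ω, x j ω ∂μ = 0 := by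
    intro j
    have hsym : Measure.map (fun t : ℝ => -t) (Measure.map (x j) μ) = Measure.map (x j) μ := by
      rw [Measure.map_map measurable_neg (hxm j)]
      have : ((fun t : ℝ => -t) ∘ x j) = fun ω => -x j ω := rfl
      rw [this, ← hxsymm j]
    have hint : Integrable (id : ℝ → ℝ) (Measure.map (x j) μ) := by
      have := (memLp_map_measure_iff aestronglyMeasurable_id (hxm j).aemeasurable).2
        (by simpa [Function.comp] using hxL2 j)
      exact this.integrable one_le_two
    have h1 : ∫ xx, xx ∂(Measure.map (x j) μ) = ∫ ω, x j ω ∂μ :=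
      integral_map (hxm j).aemeasurable aestronglyMeasurable_id
    rw [← h1, aux_symm_mean hsym hint]
  have hrelu_sq : ∀ a : ℝ, (max 0 a) ^ 2 ≤ a ^ 2 := by
    intro a
    rcases le_total a 0 with h | h
    · rw [max_eq_left h]; simpa using sq_nonneg a
    · rw [max_eq_right h]
  have Iu2 : ∀ j : Fin n, ∫ ω, (max 0 (x j ω)) ^ 2 ∂μ = variance (x j) μ / 2 := by
    intro j
    have hvar : variance (x j) μ = ∫ ω, x j ω ^ 2 ∂μ := by
      rw [variance_eq_sub (hxL2 j), Ix1 j]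
      simp [Pi.pow_apply]
    -- symmetry: ∫ relu(x)² = ∫ relu(-x)²
    have hsymm2 : (∫ ω, (max 0 (x j ω)) ^ 2 ∂μ) = ∫ ω, (max 0 (-x j ω)) ^ 2 ∂μ := by
      have hf : AEStronglyMeasurable (fun t : ℝ => (max 0 t) ^ 2) (Measure.map (x j) μ) :=
        ((measurable_const.max measurable_id).pow_const 2).aestronglyMeasurable
      have h1 : ∫ t, (max 0 t) ^ 2 ∂(Measure.map (x j) μ) = ∫ ω, (max 0 (x j ω)) ^ 2 ∂μ :=
        integral_map (hxm j).aemeasurable hf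
      have hf2 : AEStronglyMeasurable (fun t : ℝ => (max 0 t) ^ 2)
          (Measure.map (fun ω => -x j ω) μ) :=
        ((measurable_const.max measurable_id).pow_const 2).aestronglyMeasurable
      have h2 : ∫ t, (max 0 t) ^ 2 ∂(Measure.map (fun ω => -x j ω) μ)
          = ∫ ω, (max 0 (-x j ω)) ^ 2 ∂μ :=
        integral_map (hxm j).neg.aemeasurable hf2
      rw [← h1, hxsymm j, h2]
    have hintp : Integrable (fun ω => (max 0 (x j ω)) ^ 2) μ := by
      refine (hxL2 j).integrable_sq.mono
        (((measurable_const.max (hxm j)).pow_const 2).aestronglyMeasurable) ?_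
      refine Filter.Eventually.of_forall fun ω => ?_
      simp only [Real.norm_eq_abs, abs_pow, sq_abs]
      exact hrelu_sq (x j ω)
    have hintm : Integrable (fun ω => (max 0 (-x j ω)) ^ 2) μ := by
      refine (hxL2 j).integrable_sq.mono
        (((measurable_const.max (hxm j).neg).pow_const 2).aestronglyMeasurable) ?_
      refine Filter.Eventually.of_forall fun ω => ?_
      simp only [Real.norm_eq_abs, abs_pow, sq_abs]
      calc (max 0 (-x j ω)) ^ 2 ≤ (-x j ω) ^ 2 := hrelu_sq _
        _ = x j ω ^ 2 := by ring
    have hadd : (∫ ω, (max 0 (x j ω)) ^ 2 ∂μ) + ∫ ω, (max 0 (-x j ω)) ^ 2 ∂μ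
        = ∫ ω, x j ω ^ 2 ∂μ := by
      rw [← integral_add hintp hintm]
      congr 1
      funext ω
      rcases le_total (x j ω) 0 with h | h
      · rw [max_eq_left h, max_eq_right (by linarith)]
        ring
      · rw [max_eq_right h, max_eq_left (by linarith)]
        ring
    rw [hvar]
    rw [← hsymm2] at hadd
    linarith
  -- the key factorization lemma
  have key : ∀ m : (Fin n ⊕ (Fin n ⊕ Fin n)) → ℕ, (∀ t, m t ≤ 2) →
      Integrable (fun ω => ∏ t, g t ω ^ m t) μ ∧
        (∫ ω, ∏ t, g t ω ^ m t ∂μ) = ∏ t, ∫ ω, g t ω ^ m t ∂μ := by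
    intro m hm2
    have hind2 : iIndepFun (m := fun _ => (inferInstance : MeasurableSpace ℝ))
        (fun t => fun ω => g t ω ^ m t) μ :=
      hgindep.comp (fun t r => r ^ m t) (fun t => measurable_id.pow_const _)
    exact aux_prod_int hind2 (fun t => (hgm t).pow_const _)
      (fun t => hgint2 t _ (hm2 t)) Finset.univ
  set mf : Fin n → Fin n → Fin n → Fin n → (Fin n ⊕ (Fin n ⊕ Fin n)) → ℕ := fun a b j k t =>
    ((((( if t = Sum.inl a then 1 else 0) + (if t = Sum.inl b then 1 else 0))
    + (if t = Sum.inr (Sum.inl j) then 1 else 0)) + (if t = Sum.inr (Sum.inl k) then 1 else 0))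
    + (if t = Sum.inr (Sum.inr j) then 1 else 0)) + (if t = Sum.inr (Sum.inr k) then 1 else 0)
    with hmfdef
  have hmf2 : ∀ a b j k t, mf a b j k t ≤ 2 := by
    intro a b j k t
    rcases t with s | s | s <;> simp [hmfdef] <;> split_ifs <;> norm_num
  have hone : ∀ (A : Fin n ⊕ (Fin n ⊕ Fin n)) (ω : Ω),
      (∏ t, g t ω ^ (if t = A then 1 else 0)) = g A ω := by
    intro A ω
    have h1 : (∏ t, g t ω ^ (if t = A then 1 else 0))
        = ∏ t, (if t = A then g t ω else 1) := by
      refine Finset.prod_congr rfl fun t _ => ?_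
      split_ifs with h <;> simp
    rw [h1, Finset.prod_ite_eq' Finset.univ A (fun t => g t ω)]
    simp
  have hpoint : ∀ a b j k (ω : Ω),
      (c a ω * max 0 (x j ω) * d j ω) * (c b ω * max 0 (x k ω) * d k ω)
        = ∏ t, g t ω ^ mf a b j k t := by
    intro a b j k ω
    simp only [hmfdef, pow_add, Finset.prod_mul_distrib, hone]
    simp only [hgdef, Sum.elim_inl, Sum.elim_inr]
    ring
  have hterm_int : ∀ a b j k, Integrable (fun ω =>
      (c a ω * max 0 (x j ω) * d j ω) * (c b ω * max 0 (x k ω) * d k ω)) μ := by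
    intro a b j k
    exact (key (mf a b j k) (hmf2 a b j k)).1.congr
      (Filter.Eventually.of_forall fun ω => (hpoint a b j k ω).symm)
  have hterm_val : ∀ a b j k, (∫ ω,
      (c a ω * max 0 (x j ω) * d j ω) * (c b ω * max 0 (x k ω) * d k ω) ∂μ)
        = ∏ t, ∫ ω, g t ω ^ mf a b j k t ∂μ := by
    intro a b j k
    rw [integral_congr_ae (Filter.Eventually.of_forall (hpoint a b j k))]
    exact (key (mf a b j k) (hmf2 a b j k)).2
  -- zero cases
  have hzero1 : ∀ a b j k, j ≠ k → (∏ t, ∫ ω, g t ω ^ mf a b j k t ∂μ) = 0 := by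
    intro a b j k hjk
    refine Finset.prod_eq_zero (Finset.mem_univ (Sum.inr (Sum.inl j))) ?_
    have hm : mf a b j k (Sum.inr (Sum.inl j)) = 1 := by simp [hmfdef, hjk]
    rw [hm]
    simpa [pow_one, hgdef] using Id1 j
  have hzero2 : ∀ i i' j : Fin n, i ≠ i' →
      (∏ t, ∫ ω, g t ω ^ mf (j-i) (j-i') j j t ∂μ) = 0 := by
    intro i i' j hii
    refine Finset.prod_eq_zero (Finset.mem_univ (Sum.inl (j - i))) ?_
    have hne : j - i ≠ j - i' := fun h => hii (sub_right_inj.mp h)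
    have hm : mf (j-i) (j-i') j j (Sum.inl (j - i)) = 1 := by simp [hmfdef, hne]
    rw [hm]
    simpa [pow_one, hgdef] using Ic1 (j - i)
  -- diagonal value
  have hdiag : ∀ i j : Fin n,
      (∏ t, ∫ ω, g t ω ^ mf (j-i) (j-i) j j t ∂μ) = (σ2:ℝ) * (variance (x j) μ / 2) := by
    intro i j
    have hsub : ({Sum.inl (j-i), Sum.inr (Sum.inl j), Sum.inr (Sum.inr j)} :
        Finset (Fin n ⊕ (Fin n ⊕ Fin n))) ⊆ Finset.univ := Finset.subset_univ _
    have hout : ∀ t ∈ Finset.univ, t ∉ ({Sum.inl (j-i), Sum.inr (Sum.inl j),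
        Sum.inr (Sum.inr j)} : Finset (Fin n ⊕ (Fin n ⊕ Fin n))) →
        (∫ ω, g t ω ^ mf (j-i) (j-i) j j t ∂μ) = 1 := by
      intro t _ ht
      simp only [Finset.mem_insert, Finset.mem_singleton, not_or] at ht
      obtain ⟨h1, h2, h3⟩ := ht
      have hm0 : mf (j-i) (j-i) j j t = 0 := by simp [hmfdef, h1, h2, h3]
      rw [hm0]
      simp
    rw [← Finset.prod_subset hsub hout]
    rw [Finset.prod_insert (by simp), Finset.prod_insert (by simp), Finset.prod_singleton]
    have hm1 : mf (j-i) (j-i) j j (Sum.inl (j-i)) = 2 := by simp [hmfdef]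
    have hm2 : mf (j-i) (j-i) j j (Sum.inr (Sum.inl j)) = 2 := by simp [hmfdef]
    have hm3 : mf (j-i) (j-i) j j (Sum.inr (Sum.inr j)) = 2 := by simp [hmfdef]
    rw [hm1, hm2, hm3]
    simp only [hgdef, Sum.elim_inl, Sum.elim_inr]
    rw [Ic2, Id2, Iu2]
    ring
  -- triple products, for the mean of y
  set mf3 : Fin n → Fin n → (Fin n ⊕ (Fin n ⊕ Fin n)) → ℕ := fun a j t =>
    (((if t = Sum.inl a then 1 else 0) + (if t = Sum.inr (Sum.inl j) then 1 else 0))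
      + (if t = Sum.inr (Sum.inr j) then 1 else 0)) with hmf3def
  have hmf3le : ∀ a j t, mf3 a j t ≤ 2 := by
    intro a j t
    rcases t with s | s | s <;> simp [hmf3def] <;> split_ifs <;> norm_num
  have hpoint3 : ∀ a j (ω : Ω), c a ω * max 0 (x j ω) * d j ω = ∏ t, g t ω ^ mf3 a j t := by
    intro a j ω
    simp only [hmf3def, pow_add, Finset.prod_mul_distrib, hone]
    simp only [hgdef, Sum.elim_inl, Sum.elim_inr]
    ring
  have h3int : ∀ a j, Integrable (fun ω => c a ω * max 0 (x j ω) * d j ω) μ := by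
    intro a j
    exact (key (mf3 a j) (hmf3le a j)).1.congr
      (Filter.Eventually.of_forall fun ω => (hpoint3 a j ω).symm)
  have h3zero : ∀ a j, (∫ ω, c a ω * max 0 (x j ω) * d j ω ∂μ) = 0 := by
    intro a j
    rw [integral_congr_ae (Filter.Eventually.of_forall (hpoint3 a j)),
      (key (mf3 a j) (hmf3le a j)).2]
    refine Finset.prod_eq_zero (Finset.mem_univ (Sum.inr (Sum.inl j))) ?_
    have hm : mf3 a j (Sum.inr (Sum.inl j)) = 1 := by simp [hmf3def]
    rw [hm]
    simpa [pow_one, hgdef] using Id1 j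
  have hy0 : ∀ i, (∫ ω, y i ω ∂μ) = 0 := by
    intro i
    rw [hy i]
    rw [integral_finset_sum Finset.univ (fun j _ => h3int (j-i) j)]
    exact Finset.sum_eq_zero fun j _ => h3zero (j-i) j
  -- double sum expansion of ∫ y i * y i'
  have hyy : ∀ i i' : Fin n, (∫ ω, y i ω * y i' ω ∂μ)
      = ∑ j, ∑ k, ∫ ω, (c (j-i) ω * max 0 (x j ω) * d j ω)
          * (c (k-i') ω * max 0 (x k ω) * d k ω) ∂μ := by
    intro i i'
    have hpt : (fun ω => y i ω * y i' ω) = fun ω => ∑ j, ∑ k,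
        (c (j-i) ω * max 0 (x j ω) * d j ω) * (c (k-i') ω * max 0 (x k ω) * d k ω) := by
      funext ω
      rw [hy i, hy i']
      rw [Finset.sum_mul_sum]
    rw [hpt]
    rw [integral_finset_sum Finset.univ
      (fun j _ => integrable_finset_sum Finset.univ (fun k _ => hterm_int (j-i) (k-i') j k))]
    exact Finset.sum_congr rfl fun j _ =>
      integral_finset_sum Finset.univ (fun k _ => hterm_int (j-i) (k-i') j k)
  constructor
  · intro i i' hii
    have hzz : (∫ ω, y i ω * y i' ω ∂μ) = 0 := by
      rw [hyy i i']
      refine Finset.sum_eq_zero fun j _ => Finset.sum_eq_zero fun k _ => ?_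
      rw [hterm_val (j-i) (k-i') j k]
      by_cases hjk : j = k
      · subst hjk
        exact hzero2 i i' j hii
      · exact hzero1 _ _ _ _ hjk
    rw [rcov, hzz, hy0 i, hy0 i']
    ring
  · intro i
    have hyL2 : MemLp (y i) 2 μ := by
      rw [hy i]
      refine memLp_finset_sum _ (fun j _ => ?_)
      refine (memLp_two_iff_integrable_sq ?_).2 ?_
      · exact (((hcm _).mul (measurable_const.max (hxm j))).mul (hdm j)).aestronglyMeasurable
      · refine (hterm_int (j-i) (j-i) j j).congr (Filter.Eventually.of_forall fun ω => ?_)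
        ring
    rw [variance_eq_sub hyL2, hy0 i]
    have hsq : (∫ ω, (y i ^ 2) ω ∂μ) = ∫ ω, y i ω * y i ω ∂μ := by
      refine integral_congr_ae (Filter.Eventually.of_forall fun ω => ?_)
      simp [Pi.pow_apply]
      ring
    rw [hsq, hyy i i]
    have hsum : ∑ j, ∑ k, (∫ ω, (c (j-i) ω * max 0 (x j ω) * d j ω)
          * (c (k-i) ω * max 0 (x k ω) * d k ω) ∂μ)
        = ∑ j : Fin n, (σ2:ℝ) * (variance (x j) μ / 2) := by
      refine Finset.sum_congr rfl fun j _ => ?_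
      rw [Finset.sum_eq_single j]
      · rw [hterm_val (j-i) (j-i) j j]
        exact hdiag i j
      · intro k _ hkj
        rw [hterm_val (j-i) (k-i) j k]
        exact hzero1 _ _ _ _ (Ne.symm hkj)
      · intro h
        exact absurd (Finset.mem_univ j) h
    rw [hsum, Finset.mul_sum]
    ring_nf
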